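/- Let k be a commutative ring which is a ℚ-algebra, A an associative unital k-algebra, λ ∈ k, and P a Rota–Baxter operator of weight λ on A. Then the k-linear map P̄ : A^ℕ → A^ℕ defined by P̄(a)_0 = P(a_0) and P̄(a)_n = a_{n−1} for n ≥ 1 is a Rota–Baxter operator of weight λ on the k-algebra (A^ℕ, ·^λ): for all a, b ∈ A^ℕ, P̄(a) ·^λ P̄(b) = P̄(P̄(a) ·^λ b + a ·^λ P̄(b) + λ·(a ·^λ b)). -/

import Mathlib

/-- The `lam`-weighted Hurwitz product on sequences:
`(a ·^lam b)_n = ∑_{r+s+t=n} (n!/(r!·s!·t!)) · lam^t · a_{r+t} · b_{s+t}`,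
the sum ranging over triples `(r,s,t)` with `r+s+t = n`, enumerated as
`r = x.1`, `s = y.1`, `t = y.2`. -/
noncomputable def hur {k A : Type*} [CommRing k] [Ring A] [Algebra k A]
    (lam : k) (a b : ℕ → A) : ℕ → A := fun n =>
  ∑ x ∈ Finset.HasAntidiagonal.antidiagonal n, ∑ y ∈ Finset.HasAntidiagonal.antidiagonal x.2,
    (n.factorial / (x.1.factorial * y.1.factorial * y.2.factorial)) •
      (lam ^ y.2 • (a (x.1 + y.2) * b (y.1 + y.2)))

/-- The sequence `J = (1,0,0,…)`, the unit for the weighted Hurwitz products. -/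
def Jseq (A : Type*) [One A] [Zero A] : ℕ → A := fun n => if n = 0 then 1 else 0

/-- The lift `P̄` of an operator `P : A → A` to sequences: `P̄(a)_0 = P(a_0)`,
`P̄(a)_n = a_{n−1}` for `n ≥ 1`. -/
def Pbar {A : Type*} (P : A → A) (a : ℕ → A) : ℕ → A := fun n =>
  match n with
  | 0 => P (a 0)
  | m + 1 => a m

namespace Stmt9Aux

/-- Trinomial coefficient. -/
def trin (r s t : ℕ) : ℕ := (r + s + t).choose r * (s + t).choose s

lemma trin_fac (r s t : ℕ) :
    (r + s + t).factorial / (r.factorial * s.factorial * t.factorial) = trin r s t := by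
  have h1 := Nat.choose_mul_factorial_mul_factorial (show r ≤ r + s + t by omega)
  have e1 : r + s + t - r = s + t := by omega
  rw [e1] at h1
  have h2 := Nat.choose_mul_factorial_mul_factorial (show s ≤ s + t by omega)
  have e2 : s + t - s = t := by omega
  rw [e2] at h2
  have key : (r + s + t).factorial = trin r s t * (r.factorial * s.factorial * t.factorial) := by
    rw [trin, ← h1, ← h2]; ring
  rw [key, Nat.mul_div_cancel _ (by positivity)]

lemma trin_pascal (r s t : ℕ) (h : 0 < r + s + t) :
    trin r s t =
      (if 1 ≤ r then trin (r - 1) s t else 0) +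
      (if 1 ≤ s then trin r (s - 1) t else 0) +
      (if 1 ≤ t then trin r s (t - 1) else 0) := by
  rcases r with _ | r <;> rcases s with _ | s <;> rcases t with _ | t <;>
    [skip; skip; skip; skip; skip; skip; skip; skip] <;>
  · first
    | omega
    | (simp only [Nat.add_succ, Nat.succ_add, Nat.add_zero, Nat.zero_add, trin,
        Nat.add_sub_cancel, if_true, if_false, Nat.le_refl]
       simp [Nat.choose_succ_succ]
       try ring)

section shifts
variable {A : Type*} [AddCommMonoid A]

lemma shiftR (h : ℕ → ℕ → ℕ → A) (n : ℕ) :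
    (∑ r ∈ Finset.range (n + 2), ∑ s ∈ Finset.range (n + 2 - r),
      if 1 ≤ r then h (r - 1) s (n + 1 - r - s) else 0) =
    ∑ r ∈ Finset.range (n + 1), ∑ s ∈ Finset.range (n + 1 - r), h r s (n - r - s) := by
  rw [Finset.sum_range_succ']
  simp only [Nat.add_sub_cancel, Nat.le_add_left, if_true, Nat.succ_sub_succ]
  have : (∑ s ∈ Finset.range (n + 2 - 0), if 1 ≤ 0 then h (0 - 1) s (n + 1 - 0 - s) else 0) = 0 := by
    simp
  rw [this, add_zero]
  simp

lemma shiftS (h : ℕ → ℕ → ℕ → A) (n : ℕ) :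
    (∑ r ∈ Finset.range (n + 2), ∑ s ∈ Finset.range (n + 2 - r),
      if 1 ≤ s then h r (s - 1) (n + 1 - r - s) else 0) =
    ∑ r ∈ Finset.range (n + 1), ∑ s ∈ Finset.range (n + 1 - r), h r s (n - r - s) := by
  rw [Finset.sum_range_succ]
  have hlast : (∑ s ∈ Finset.range (n + 2 - (n + 1)),
      if 1 ≤ s then h (n + 1) (s - 1) (n + 1 - (n + 1) - s) else 0) = 0 := by
    have : n + 2 - (n + 1) = 1 := by omega
    rw [this]
    simp
  rw [hlast, add_zero]
  refine Finset.sum_congr rfl fun r hr => ?_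
  rw [Finset.mem_range] at hr
  have e : n + 2 - r = (n + 1 - r) + 1 := by omega
  rw [e, Finset.sum_range_succ']
  simp only [Nat.add_sub_cancel, Nat.le_add_left, if_true]
  have h0 : (if 1 ≤ 0 then h r (0 - 1) (n + 1 - r - 0) else 0) = 0 := by simp
  rw [h0, add_zero]
  refine Finset.sum_congr rfl fun s hs => ?_
  congr 1
  omega

lemma shiftT (h : ℕ → ℕ → ℕ → A) (n : ℕ) :
    (∑ r ∈ Finset.range (n + 2), ∑ s ∈ Finset.range (n + 2 - r),
      if 1 ≤ n + 1 - r - s then h r s (n + 1 - r - s - 1) else 0) =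
    ∑ r ∈ Finset.range (n + 1), ∑ s ∈ Finset.range (n + 1 - r), h r s (n - r - s) := by
  rw [Finset.sum_range_succ]
  have hlast : (∑ s ∈ Finset.range (n + 2 - (n + 1)),
      if 1 ≤ n + 1 - (n + 1) - s then h (n + 1) s (n + 1 - (n + 1) - s - 1) else 0) = 0 := by
    have : n + 2 - (n + 1) = 1 := by omega
    rw [this]
    simp
  rw [hlast, add_zero]
  refine Finset.sum_congr rfl fun r hr => ?_
  rw [Finset.mem_range] at hr
  have e : n + 2 - r = (n + 1 - r) + 1 := by omega
  rw [e, Finset.sum_range_succ]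
  have hl2 : (if 1 ≤ n + 1 - r - (n + 1 - r) then h r (n + 1 - r) (n + 1 - r - (n + 1 - r) - 1) else 0) = 0 := by
    have : n + 1 - r - (n + 1 - r) = 0 := by omega
    rw [this]
    simp
  rw [hl2, add_zero]
  refine Finset.sum_congr rfl fun s hs => ?_
  rw [Finset.mem_range] at hs
  rw [if_pos (by omega)]
  congr 1
  omega

end shifts

section main
variable {k A : Type*} [CommRing k] [Ring A] [Algebra k A] (lam : k)

/-- The generic term of the Hurwitz sum. -/
noncomputable def Tm (a b : ℕ → A) (r s t : ℕ) : A :=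
  trin r s t • (lam ^ t • (a (r + t) * b (s + t)))

lemma hur_eq (a b : ℕ → A) (n : ℕ) :
    hur lam a b n =
      ∑ r ∈ Finset.range (n + 1), ∑ s ∈ Finset.range (n + 1 - r),
        Tm lam a b r s (n - r - s) := by
  rw [hur, Finset.Nat.sum_antidiagonal_eq_sum_range_succ_mk]
  refine Finset.sum_congr rfl fun r hr => ?_
  rw [Finset.mem_range] at hr
  rw [Finset.Nat.sum_antidiagonal_eq_sum_range_succ_mk]
  dsimp only [Nat.succ_eq_add_one]
  have e : n - r + 1 = n + 1 - r := by omega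
  rw [e]
  refine Finset.sum_congr rfl fun s hs => ?_
  rw [Finset.mem_range] at hs
  have e2 : n = r + s + (n - r - s) := by omega
  rw [Tm, ← trin_fac]
  rw [← congrArg Nat.factorial e2]

set_option linter.unusedSectionVars false in
lemma Pbar_succ (P : A → A) (a : ℕ → A) (m : ℕ) : Pbar P a (m + 1) = a m := rfl

lemma point (P : A → A) (a b : ℕ → A) (r s t : ℕ) (h : 0 < r + s + t) :
    Tm lam (Pbar P a) (Pbar P b) r s t =
      (if 1 ≤ r then Tm lam a (Pbar P b) (r - 1) s t else 0) +
      (if 1 ≤ s then Tm lam (Pbar P a) b r (s - 1) t else 0) +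
      (if 1 ≤ t then lam • Tm lam a b r s (t - 1) else 0) := by
  have hsm : ∀ (t : ℕ) (x : A), lam • (lam ^ t • x) = lam ^ (t + 1) • x := by
    intro t x
    rw [← mul_smul, ← pow_succ']
  rcases r with _ | r <;> rcases s with _ | s <;> rcases t with _ | t <;>
    [omega; skip; skip; skip; skip; skip; skip; skip] <;>
  · simp only [Tm]
    rw [trin_pascal _ _ _ (by omega)]
    simp only [add_smul, ite_smul, zero_smul]
    simp +arith +decide [Pbar_succ, hsm]
    try ring_nf

lemma main_succ (P : A → A) (a b : ℕ → A) (n : ℕ) :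
    hur lam (Pbar P a) (Pbar P b) (n + 1) =
      hur lam (Pbar P a) b n + hur lam a (Pbar P b) n + lam • hur lam a b n := by
  rw [hur_eq, hur_eq, hur_eq, hur_eq]
  have step1 : (∑ r ∈ Finset.range (n + 1 + 1), ∑ s ∈ Finset.range (n + 1 + 1 - r),
        Tm lam (Pbar P a) (Pbar P b) r s (n + 1 - r - s)) =
      ∑ r ∈ Finset.range (n + 2), ∑ s ∈ Finset.range (n + 2 - r),
        ((if 1 ≤ r then Tm lam a (Pbar P b) (r - 1) s (n + 1 - r - s) else 0) +
         ((if 1 ≤ s then Tm lam (Pbar P a) b r (s - 1) (n + 1 - r - s) else 0) +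
          (if 1 ≤ n + 1 - r - s then lam • Tm lam a b r s (n + 1 - r - s - 1) else 0))) := by
    refine Finset.sum_congr rfl fun r hr => Finset.sum_congr rfl fun s hs => ?_
    rw [Finset.mem_range] at hr hs
    rw [point lam P a b r s (n + 1 - r - s) (by omega), add_assoc]
  rw [step1]
  simp only [Finset.sum_add_distrib]
  rw [shiftR (fun r s t => Tm lam a (Pbar P b) r s t) n,
      shiftS (fun r s t => Tm lam (Pbar P a) b r s t) n,
      shiftT (fun r s t => lam • Tm lam a b r s t) n]
  simp only [Finset.smul_sum]
  abel

end main

end Stmt9Aux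

/-- If `P` is a Rota–Baxter operator of weight `λ` on `A`, then the
`k`-linear map `P̄` is a Rota–Baxter operator of weight `λ` on `(A^ℕ, ·^λ)`. -/
theorem stmt9 {k A : Type*} [CommRing k] [Algebra ℚ k] [Ring A] [Algebra k A] (lam : k)
    (P : A → A)
    (hPadd : ∀ x y : A, P (x + y) = P x + P y)
    (hPsmul : ∀ (c : k) (x : A), P (c • x) = c • P x)
    (hPRB : ∀ x y : A, P x * P y = P (P x * y + x * P y + lam • (x * y))) :
    (∀ a b : ℕ → A, Pbar P (a + b) = Pbar P a + Pbar P b) ∧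
    (∀ (c : k) (a : ℕ → A), Pbar P (c • a) = c • Pbar P a) ∧
    (∀ a b : ℕ → A,
      hur lam (Pbar P a) (Pbar P b) =
        Pbar P (hur lam (Pbar P a) b + hur lam a (Pbar P b) + lam • hur lam a b)) := by
  refine ⟨?_, ?_, ?_⟩
  · intro a b
    funext n
    cases n with
    | zero => simp [Pbar, hPadd]
    | succ m => simp [Pbar]
  · intro c a
    funext n
    cases n with
    | zero => simp [Pbar, hPsmul]
    | succ m => simp [Pbar]
  · intro a b
    have h0 : ∀ x y : ℕ → A, hur lam x y 0 = x 0 * y 0 := by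
      intro x y
      simp [hur]
    funext n
    cases n with
    | zero =>
      show hur lam (Pbar P a) (Pbar P b) 0 = P _
      rw [h0]
      show P (a 0) * P (b 0) = _
      rw [hPRB]
      congr 1
      simp only [Pi.add_apply, Pi.smul_apply, h0]
      rfl
    | succ m =>
      show hur lam (Pbar P a) (Pbar P b) (m + 1) = _
      rw [Stmt9Aux.main_succ lam P a b m]
      rfl
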